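/- arXiv:2111.03410 — 2 statements merged into one kernel-verified Lean document; each statement's English description precedes it below -/
import Mathlib

section
/- Let (s_n)_{n≥0} be a sequence of nonnegative reals with Σ_{n=0}^∞ s_n = S < ∞, and for λ > -1 define θ(x) := Σ_{n=0}^∞ s_n · ζ(1+x, n+1+λ) for x > 0, where ζ is the Hurwitz zeta function. Then lim_{x→0⁺} x·θ(x) = S. -/
open Filter Topology Set

private lemma mvt_rpow {a x : ℝ} (ha : 0 < a) (hx : 0 < x) :
    x * (a + 1) ^ (-(1 + x)) ≤ a ^ (-x) - (a + 1) ^ (-x) ∧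
      a ^ (-x) - (a + 1) ^ (-x) ≤ x * a ^ (-(1 + x)) := by
  have hab : a < a + 1 := by linarith
  have hcont : ContinuousOn (fun t : ℝ => -(t ^ (-x))) (Icc a (a + 1)) := by
    apply ContinuousOn.neg
    exact ContinuousOn.rpow_const continuousOn_id
      (fun t ht => Or.inl (ne_of_gt (lt_of_lt_of_le ha ht.1)))
  have hderiv : ∀ t ∈ Ioo a (a + 1),
      HasDerivAt (fun t : ℝ => -(t ^ (-x))) (x * t ^ (-(1 + x))) t := by
    intro t ht
    have h := (Real.hasDerivAt_rpow_const (p := -x) (Or.inl (ne_of_gt (ha.trans ht.1)))).neg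
    refine h.congr_deriv ?_
    rw [show -x - 1 = -(1 + x) by ring]
    ring
  obtain ⟨c, hc, hcd⟩ := exists_hasDerivAt_eq_slope (fun t : ℝ => -(t ^ (-x)))
    (fun t : ℝ => x * t ^ (-(1 + x))) hab hcont hderiv
  have hcpos : 0 < c := ha.trans hc.1
  have hslope : a ^ (-x) - (a + 1) ^ (-x) = x * c ^ (-(1 + x)) := by
    rw [hcd]
    have : a + 1 - a = 1 := by ring
    rw [this, div_one]
    ring
  constructor
  · rw [hslope]
    exact mul_le_mul_of_nonneg_left
      (Real.rpow_le_rpow_of_nonpos hcpos hc.2.le (by linarith)) hx.le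
  · rw [hslope]
    exact mul_le_mul_of_nonneg_left
      (Real.rpow_le_rpow_of_nonpos ha hc.1.le (by linarith)) hx.le

private lemma telescope_hasSum {q x : ℝ} (hq : 0 < q) (hx : 0 < x) :
    HasSum (fun m : ℕ => ((m : ℝ) + q) ^ (-x) - ((m : ℝ) + 1 + q) ^ (-x)) (q ^ (-x)) := by
  have hnn : ∀ m : ℕ, 0 ≤ ((m : ℝ) + q) ^ (-x) - ((m : ℝ) + 1 + q) ^ (-x) := by
    intro m
    have hm : (0:ℝ) ≤ m := Nat.cast_nonneg m
    have : ((m:ℝ) + 1 + q) ^ (-x) ≤ ((m:ℝ) + q) ^ (-x) :=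
      Real.rpow_le_rpow_of_nonpos (by linarith) (by linarith) (by linarith)
    linarith
  rw [hasSum_iff_tendsto_nat_of_nonneg hnn]
  have hsum : ∀ N : ℕ, ∑ m ∈ Finset.range N,
      (((m : ℝ) + q) ^ (-x) - ((m : ℝ) + 1 + q) ^ (-x))
      = q ^ (-x) - ((N : ℝ) + q) ^ (-x) := by
    intro N
    have h := Finset.sum_range_sub' (fun m : ℕ => ((m : ℝ) + q) ^ (-x)) N
    push_cast at h
    convert h using 2 with m
    ring_nf
  simp only [hsum]
  have h0 : Tendsto (fun N : ℕ => ((N : ℝ) + q) ^ (-x)) atTop (𝓝 0) :=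
    (tendsto_rpow_neg_atTop hx).comp
      (tendsto_atTop_add_const_right atTop q tendsto_natCast_atTop_atTop)
  simpa using tendsto_const_nhds.sub h0

private lemma summable_shift {q x : ℝ} (hq : 0 < q) (hx : 0 < x) :
    Summable (fun m : ℕ => ((m : ℝ) + q) ^ (-(1 + x))) := by
  have h1 : Summable (fun m : ℕ => ((m : ℝ)) ^ (-(1 + x))) :=
    Real.summable_nat_rpow.mpr (by linarith)
  have h2 := (summable_nat_add_iff 1).mpr h1
  apply (summable_nat_add_iff (f := fun m : ℕ => ((m : ℝ) + q) ^ (-(1 + x))) 1).mp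
  refine Summable.of_nonneg_of_le (fun m => by positivity) (fun m => ?_) h2
  have hm : (0:ℝ) ≤ m := Nat.cast_nonneg m
  push_cast
  exact Real.rpow_le_rpow_of_nonpos (by linarith) (by linarith) (by linarith)

private lemma key_bounds {q x : ℝ} (hq : 0 < q) (hx : 0 < x) :
    q ^ (-x) ≤ x * ∑' m : ℕ, ((m : ℝ) + q) ^ (-(1 + x)) ∧
      x * ∑' m : ℕ, ((m : ℝ) + q) ^ (-(1 + x)) ≤ x * q ^ (-(1 + x)) + q ^ (-x) := by
  have hsum := summable_shift hq hx
  have htel := telescope_hasSum hq hx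
  have hmvt1 : ∀ m : ℕ, x * (((m:ℝ) + 1) + q) ^ (-(1 + x)) ≤
      ((m:ℝ) + q) ^ (-x) - ((m:ℝ) + 1 + q) ^ (-x) := by
    intro m
    have hm : (0:ℝ) ≤ m := Nat.cast_nonneg m
    have h := (mvt_rpow (a := (m:ℝ) + q) (by linarith) hx).1
    rw [show (m:ℝ) + q + 1 = (m:ℝ) + 1 + q by ring] at h
    exact h
  have hmvt2 : ∀ m : ℕ, ((m:ℝ) + q) ^ (-x) - ((m:ℝ) + 1 + q) ^ (-x) ≤
      x * ((m:ℝ) + q) ^ (-(1 + x)) := by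
    intro m
    have hm : (0:ℝ) ≤ m := Nat.cast_nonneg m
    have h := (mvt_rpow (a := (m:ℝ) + q) (by linarith) hx).2
    rw [show (m:ℝ) + q + 1 = (m:ℝ) + 1 + q by ring] at h
    exact h
  constructor
  · calc q ^ (-x) = ∑' m : ℕ, (((m:ℝ) + q) ^ (-x) - ((m:ℝ) + 1 + q) ^ (-x)) :=
          htel.tsum_eq.symm
      _ ≤ ∑' m : ℕ, x * ((m:ℝ) + q) ^ (-(1 + x)) :=
          Summable.tsum_le_tsum hmvt2 htel.summable (hsum.mul_left x)
      _ = x * ∑' m : ℕ, ((m:ℝ) + q) ^ (-(1 + x)) := tsum_mul_left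
  · have hshift : Summable (fun m : ℕ => x * (((m:ℝ) + 1) + q) ^ (-(1 + x))) := by
      have := (summable_nat_add_iff (f := fun m : ℕ => x * ((m:ℝ) + q) ^ (-(1 + x))) 1).mpr
        (hsum.mul_left x)
      refine this.congr (fun m => ?_)
      push_cast
      ring_nf
    have h0 : x * ∑' m : ℕ, ((m:ℝ) + q) ^ (-(1 + x)) =
        x * ((0:ℝ) + q) ^ (-(1 + x)) + ∑' m : ℕ, x * (((m:ℝ) + 1) + q) ^ (-(1 + x)) := by
      rw [← tsum_mul_left, Summable.tsum_eq_zero_add (hsum.mul_left x)]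
      push_cast
      norm_num
    rw [h0]
    have hle : ∑' m : ℕ, x * (((m:ℝ) + 1) + q) ^ (-(1 + x)) ≤ q ^ (-x) := by
      rw [← htel.tsum_eq]
      exact Summable.tsum_le_tsum hmvt1 hshift htel.summable
    simp only [zero_add]
    linarith

/-- If `s_n ≥ 0` with `∑ s_n = S` and `λ > -1`, then for
`θ(x) = ∑_n s_n ζ(1+x, n+1+λ)` one has `lim_{x→0⁺} x θ(x) = S`. -/
theorem residue_formula_scalar (s : ℕ → ℝ) (hpos : ∀ n, 0 ≤ s n) (S : ℝ)
    (hS : HasSum s S) (lam : ℝ) (hlam : -1 < lam) :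
    Tendsto (fun x : ℝ =>
        x * ∑' n : ℕ, s n * ∑' m : ℕ, ((m : ℝ) + ((n : ℝ) + 1 + lam)) ^ (-(1 + x)))
      (𝓝[>] (0 : ℝ)) (𝓝 S) := by
  have hq0 : (0:ℝ) < 1 + lam := by linarith
  set C : ℝ := max 1 ((1 + lam) ^ (-2 : ℝ)) with hCdef
  have hC0 : (0:ℝ) ≤ C := le_trans zero_le_one (le_max_left _ _)
  have hCb : ∀ e q : ℝ, 0 < e → e ≤ 2 → 1 + lam ≤ q → q ^ (-e) ≤ C := by
    intro e q he he2 hle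
    have hqpos : 0 < q := lt_of_lt_of_le hq0 hle
    rcases le_or_gt 1 q with h1 | h1
    · exact le_trans (Real.rpow_le_one_of_one_le_of_nonpos h1 (by linarith)) (le_max_left _ _)
    · calc q ^ (-e) ≤ q ^ (-2 : ℝ) :=
            Real.rpow_le_rpow_of_exponent_ge hqpos h1.le (by linarith)
        _ ≤ (1 + lam) ^ (-2 : ℝ) := Real.rpow_le_rpow_of_nonpos hq0 hle (by norm_num)
        _ ≤ C := le_max_right _ _
  have hqn : ∀ n : ℕ, 1 + lam ≤ (n:ℝ) + 1 + lam := by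
    intro n
    have : (0:ℝ) ≤ n := Nat.cast_nonneg n
    linarith
  have hqnpos : ∀ n : ℕ, 0 < (n:ℝ) + 1 + lam := fun n => lt_of_lt_of_le hq0 (hqn n)
  have hIoc : Ioc (0:ℝ) 1 ∈ 𝓝[>] (0:ℝ) :=
    Ioc_mem_nhdsGT_of_mem (by norm_num : (0:ℝ) ∈ Ico (0:ℝ) 1)
  have hcont1 : ∀ n : ℕ, Tendsto (fun x : ℝ => ((n:ℝ) + 1 + lam) ^ (-x)) (𝓝[>] (0:ℝ)) (𝓝 1) := by
    intro n
    have hc : ContinuousAt (fun x : ℝ => ((n:ℝ) + 1 + lam) ^ (-x)) 0 :=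
      (Real.continuousAt_const_rpow (hqnpos n).ne').comp continuous_neg.continuousAt
    have h := hc.tendsto.mono_left (nhdsWithin_le_nhds (s := Set.Ioi (0:ℝ)))
    simpa using h
  have hcont2 : ∀ n : ℕ, Tendsto (fun x : ℝ => x * ((n:ℝ) + 1 + lam) ^ (-(1 + x)))
      (𝓝[>] (0:ℝ)) (𝓝 0) := by
    intro n
    have hc : ContinuousAt (fun x : ℝ => x * ((n:ℝ) + 1 + lam) ^ (-(1 + x))) 0 := by
      apply ContinuousAt.mul continuousAt_id
      exact (Real.continuousAt_const_rpow (hqnpos n).ne').comp (by fun_prop)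
    have h := hc.tendsto.mono_left (nhdsWithin_le_nhds (s := Set.Ioi (0:ℝ)))
    simpa using h
  -- lower comparison function
  have hL : Tendsto (fun x : ℝ => ∑' n : ℕ, s n * ((n:ℝ) + 1 + lam) ^ (-x))
      (𝓝[>] (0:ℝ)) (𝓝 S) := by
    have h := tendsto_tsum_of_dominated_convergence
      (f := fun (x : ℝ) (n : ℕ) => s n * ((n:ℝ) + 1 + lam) ^ (-x))
      (g := s) (bound := fun n => s n * C) (hS.summable.mul_right C)
      (fun n => by simpa using (hcont1 n).const_mul (s n))
      ?_
    · simpa [hS.tsum_eq] using h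
    · filter_upwards [hIoc] with x hx n
      rw [Real.norm_eq_abs,
        abs_of_nonneg (mul_nonneg (hpos n) (Real.rpow_nonneg (hqnpos n).le _))]
      exact mul_le_mul_of_nonneg_left (hCb x _ hx.1 (by linarith [hx.2]) (hqn n)) (hpos n)
  -- upper comparison function
  have hU : Tendsto (fun x : ℝ => ∑' n : ℕ,
      s n * (((n:ℝ) + 1 + lam) ^ (-x) + x * ((n:ℝ) + 1 + lam) ^ (-(1 + x))))
      (𝓝[>] (0:ℝ)) (𝓝 S) := by
    have h := tendsto_tsum_of_dominated_convergence
      (f := fun (x : ℝ) (n : ℕ) =>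
        s n * (((n:ℝ) + 1 + lam) ^ (-x) + x * ((n:ℝ) + 1 + lam) ^ (-(1 + x))))
      (g := s) (bound := fun n => s n * (C + C)) (hS.summable.mul_right (C + C))
      (fun n => by simpa using ((hcont1 n).add (hcont2 n)).const_mul (s n))
      ?_
    · simpa [hS.tsum_eq] using h
    · filter_upwards [hIoc] with x hx n
      have hb1 : ((n:ℝ) + 1 + lam) ^ (-x) ≤ C := hCb x _ hx.1 (by linarith [hx.2]) (hqn n)
      have hb2 : x * ((n:ℝ) + 1 + lam) ^ (-(1 + x)) ≤ C := by
        have h2 : ((n:ℝ) + 1 + lam) ^ (-(1 + x)) ≤ C :=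
          hCb (1 + x) _ (by linarith [hx.1]) (by linarith [hx.2]) (hqn n)
        calc x * ((n:ℝ) + 1 + lam) ^ (-(1 + x)) ≤ 1 * C := by
              apply mul_le_mul hx.2 h2 (Real.rpow_nonneg (hqnpos n).le _) zero_le_one
          _ = C := one_mul C
      have hnn : (0:ℝ) ≤ ((n:ℝ) + 1 + lam) ^ (-x) + x * ((n:ℝ) + 1 + lam) ^ (-(1 + x)) := by
        have := Real.rpow_nonneg (hqnpos n).le (-x)
        have := mul_nonneg hx.1.le (Real.rpow_nonneg (hqnpos n).le (-(1 + x)))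
        linarith
      rw [Real.norm_eq_abs, abs_of_nonneg (mul_nonneg (hpos n) hnn)]
      exact mul_le_mul_of_nonneg_left (by linarith) (hpos n)
  apply tendsto_of_tendsto_of_tendsto_of_le_of_le' hL hU
  · filter_upwards [hIoc] with x hx
    have hx0 := hx.1
    have hkey := fun n : ℕ => key_bounds (hqnpos n) hx0
    have hZnn : ∀ n : ℕ, (0:ℝ) ≤ ∑' m : ℕ, ((m : ℝ) + ((n : ℝ) + 1 + lam)) ^ (-(1 + x)) :=
      fun n => tsum_nonneg (fun m => Real.rpow_nonneg (by have h1 := hqnpos n; have h2 : (0:ℝ) ≤ (m:ℝ) := Nat.cast_nonneg m; linarith) _)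
    have hsumL : Summable (fun n : ℕ => s n * ((n:ℝ) + 1 + lam) ^ (-x)) := by
      refine Summable.of_nonneg_of_le
        (fun n => mul_nonneg (hpos n) (Real.rpow_nonneg (hqnpos n).le _))
        (fun n => ?_) (hS.summable.mul_right C)
      exact mul_le_mul_of_nonneg_left (hCb x _ hx.1 (by linarith [hx.2]) (hqn n)) (hpos n)
    have hup : ∀ n : ℕ, x * (s n * ∑' m : ℕ, ((m : ℝ) + ((n : ℝ) + 1 + lam)) ^ (-(1 + x))) ≤
        s n * (((n:ℝ) + 1 + lam) ^ (-x) + x * ((n:ℝ) + 1 + lam) ^ (-(1 + x))) := by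
      intro n
      have h2 := (hkey n).2
      calc x * (s n * ∑' m : ℕ, ((m : ℝ) + ((n : ℝ) + 1 + lam)) ^ (-(1 + x)))
          = s n * (x * ∑' m : ℕ, ((m : ℝ) + ((n : ℝ) + 1 + lam)) ^ (-(1 + x))) := by ring
        _ ≤ s n * (x * ((n:ℝ) + 1 + lam) ^ (-(1 + x)) + ((n:ℝ) + 1 + lam) ^ (-x)) :=
            mul_le_mul_of_nonneg_left h2 (hpos n)
        _ = s n * (((n:ℝ) + 1 + lam) ^ (-x) + x * ((n:ℝ) + 1 + lam) ^ (-(1 + x))) := by ring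
    have hsumU : Summable (fun n : ℕ =>
        s n * (((n:ℝ) + 1 + lam) ^ (-x) + x * ((n:ℝ) + 1 + lam) ^ (-(1 + x)))) := by
      refine Summable.of_nonneg_of_le (fun n => ?_) (fun n => ?_) (hS.summable.mul_right (C + C))
      · have h1 := Real.rpow_nonneg (hqnpos n).le (-x)
        have h2 := mul_nonneg hx0.le (Real.rpow_nonneg (hqnpos n).le (-(1 + x)))
        exact mul_nonneg (hpos n) (by linarith)
      · have hb1 : ((n:ℝ) + 1 + lam) ^ (-x) ≤ C := hCb x _ hx.1 (by linarith [hx.2]) (hqn n)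
        have hb2 : x * ((n:ℝ) + 1 + lam) ^ (-(1 + x)) ≤ C := by
          have h2 : ((n:ℝ) + 1 + lam) ^ (-(1 + x)) ≤ C :=
            hCb (1 + x) _ (by linarith [hx.1]) (by linarith [hx.2]) (hqn n)
          calc x * ((n:ℝ) + 1 + lam) ^ (-(1 + x)) ≤ 1 * C :=
                mul_le_mul hx.2 h2 (Real.rpow_nonneg (hqnpos n).le _) zero_le_one
            _ = C := one_mul C
        exact mul_le_mul_of_nonneg_left (by linarith) (hpos n)
    have hsumF : Summable (fun n : ℕ =>
        x * (s n * ∑' m : ℕ, ((m : ℝ) + ((n : ℝ) + 1 + lam)) ^ (-(1 + x)))) :=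
      Summable.of_nonneg_of_le
        (fun n => mul_nonneg hx0.le (mul_nonneg (hpos n) (hZnn n))) hup hsumU
    have hlo : ∀ n : ℕ, s n * ((n:ℝ) + 1 + lam) ^ (-x) ≤
        x * (s n * ∑' m : ℕ, ((m : ℝ) + ((n : ℝ) + 1 + lam)) ^ (-(1 + x))) := by
      intro n
      have h1 := (hkey n).1
      calc s n * ((n:ℝ) + 1 + lam) ^ (-x)
          ≤ s n * (x * ∑' m : ℕ, ((m : ℝ) + ((n : ℝ) + 1 + lam)) ^ (-(1 + x))) :=
            mul_le_mul_of_nonneg_left h1 (hpos n)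
        _ = x * (s n * ∑' m : ℕ, ((m : ℝ) + ((n : ℝ) + 1 + lam)) ^ (-(1 + x))) := by ring
    calc (∑' n : ℕ, s n * ((n:ℝ) + 1 + lam) ^ (-x))
        ≤ ∑' n : ℕ, x * (s n * ∑' m : ℕ, ((m : ℝ) + ((n : ℝ) + 1 + lam)) ^ (-(1 + x))) :=
          Summable.tsum_le_tsum hlo hsumL hsumF
      _ = x * ∑' n : ℕ, s n * ∑' m : ℕ, ((m : ℝ) + ((n : ℝ) + 1 + lam)) ^ (-(1 + x)) :=
          tsum_mul_left
  · filter_upwards [hIoc] with x hx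
    have hx0 := hx.1
    have hkey := fun n : ℕ => key_bounds (hqnpos n) hx0
    have hZnn : ∀ n : ℕ, (0:ℝ) ≤ ∑' m : ℕ, ((m : ℝ) + ((n : ℝ) + 1 + lam)) ^ (-(1 + x)) :=
      fun n => tsum_nonneg (fun m => Real.rpow_nonneg (by have h1 := hqnpos n; have h2 : (0:ℝ) ≤ (m:ℝ) := Nat.cast_nonneg m; linarith) _)
    have hup : ∀ n : ℕ, x * (s n * ∑' m : ℕ, ((m : ℝ) + ((n : ℝ) + 1 + lam)) ^ (-(1 + x))) ≤
        s n * (((n:ℝ) + 1 + lam) ^ (-x) + x * ((n:ℝ) + 1 + lam) ^ (-(1 + x))) := by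
      intro n
      have h2 := (hkey n).2
      calc x * (s n * ∑' m : ℕ, ((m : ℝ) + ((n : ℝ) + 1 + lam)) ^ (-(1 + x)))
          = s n * (x * ∑' m : ℕ, ((m : ℝ) + ((n : ℝ) + 1 + lam)) ^ (-(1 + x))) := by ring
        _ ≤ s n * (x * ((n:ℝ) + 1 + lam) ^ (-(1 + x)) + ((n:ℝ) + 1 + lam) ^ (-x)) :=
            mul_le_mul_of_nonneg_left h2 (hpos n)
        _ = s n * (((n:ℝ) + 1 + lam) ^ (-x) + x * ((n:ℝ) + 1 + lam) ^ (-(1 + x))) := by ring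
    have hsumU : Summable (fun n : ℕ =>
        s n * (((n:ℝ) + 1 + lam) ^ (-x) + x * ((n:ℝ) + 1 + lam) ^ (-(1 + x)))) := by
      refine Summable.of_nonneg_of_le (fun n => ?_) (fun n => ?_) (hS.summable.mul_right (C + C))
      · have h1 := Real.rpow_nonneg (hqnpos n).le (-x)
        have h2 := mul_nonneg hx0.le (Real.rpow_nonneg (hqnpos n).le (-(1 + x)))
        exact mul_nonneg (hpos n) (by linarith)
      · have hb1 : ((n:ℝ) + 1 + lam) ^ (-x) ≤ C := hCb x _ hx.1 (by linarith [hx.2]) (hqn n)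
        have hb2 : x * ((n:ℝ) + 1 + lam) ^ (-(1 + x)) ≤ C := by
          have h2 : ((n:ℝ) + 1 + lam) ^ (-(1 + x)) ≤ C :=
            hCb (1 + x) _ (by linarith [hx.1]) (by linarith [hx.2]) (hqn n)
          calc x * ((n:ℝ) + 1 + lam) ^ (-(1 + x)) ≤ 1 * C :=
                mul_le_mul hx.2 h2 (Real.rpow_nonneg (hqnpos n).le _) zero_le_one
            _ = C := one_mul C
        exact mul_le_mul_of_nonneg_left (by linarith) (hpos n)
    have hsumF : Summable (fun n : ℕ =>
        x * (s n * ∑' m : ℕ, ((m : ℝ) + ((n : ℝ) + 1 + lam)) ^ (-(1 + x)))) :=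
      Summable.of_nonneg_of_le
        (fun n => mul_nonneg hx0.le (mul_nonneg (hpos n) (hZnn n))) hup hsumU
    calc x * ∑' n : ℕ, s n * ∑' m : ℕ, ((m : ℝ) + ((n : ℝ) + 1 + lam)) ^ (-(1 + x))
        = ∑' n : ℕ, x * (s n * ∑' m : ℕ, ((m : ℝ) + ((n : ℝ) + 1 + lam)) ^ (-(1 + x))) :=
          tsum_mul_left.symm
      _ ≤ ∑' n : ℕ, s n * (((n:ℝ) + 1 + lam) ^ (-x) + x * ((n:ℝ) + 1 + lam) ^ (-(1 + x))) :=
          Summable.tsum_le_tsum hup hsumF hsumU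
end

section
/- Tauberian criterion (scalar version): Let (a_k)_{k≥1} be a nonincreasing sequence of nonnegative reals tending to 0 such that Σ_{k=1}^∞ a_k^s < ∞ for every s > 1, and suppose lim_{s→1⁺} (s−1)·Σ_{k=1}^∞ a_k^s = L. Then lim_{N→∞} (1/log N)·Σ_{k=1}^N a_k = L. -/
open Filter Topology

/-- index where the antitone sequence drops below `t`. -/
noncomputable def tbN (a : ℕ → ℝ) (t : ℝ) : ℕ := sInf {k | a k < t}

lemma tbN_lt (a : ℕ → ℝ) (hmono : Antitone a) (hlim : Tendsto a atTop (𝓝 0))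
    {t : ℝ} (ht : 0 < t) {k : ℕ} (hk : tbN a t ≤ k) : a k < t := by
  have hne : {k | a k < t}.Nonempty := by
    have := (hlim.eventually (eventually_lt_nhds ht)).exists
    exact ⟨this.choose, this.choose_spec⟩
  exact lt_of_le_of_lt (hmono hk) (Nat.sInf_mem hne)

lemma tbN_le (a : ℕ → ℝ) {t : ℝ} {k : ℕ} (hk : k < tbN a t) : t ≤ a k := by
  by_contra h
  have : a k < t := lt_of_not_ge h
  have hle : tbN a t ≤ k := Nat.sInf_le this
  omega

lemma tb_map {c : ℝ} (hc : 0 < c) :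
    Tendsto (fun x : ℝ => 1 + c * x) (𝓝[>] (0:ℝ)) (𝓝[>] (1:ℝ)) := by
  apply tendsto_nhdsWithin_of_tendsto_nhds_of_eventually_within
  · have : Tendsto (fun x : ℝ => 1 + c * x) (𝓝 0) (𝓝 (1 + c * 0)) := by
      exact (tendsto_const_nhds.add (tendsto_const_nhds.mul tendsto_id))
    simpa using this.mono_left nhdsWithin_le_nhds
  · filter_upwards [self_mem_nhdsWithin] with x hx
    have : (0:ℝ) < x := hx
    have : (0:ℝ) < c * x := mul_pos hc this
    simp only [Set.mem_Ioi]; linarith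

lemma tb_moment (a : ℕ → ℝ) (L : ℝ)
    (hres : Tendsto (fun s : ℝ => (s - 1) * ∑' k : ℕ, a k ^ s) (𝓝[>] (1 : ℝ)) (𝓝 L))
    (m : ℕ) :
    Tendsto (fun x : ℝ => x * ∑' k : ℕ, a k ^ (1 + (m + 1 : ℝ) * x)) (𝓝[>] (0:ℝ))
      (𝓝 (L / (m + 1))) := by
  have hc : (0:ℝ) < (m + 1 : ℝ) := by positivity
  have h1 := hres.comp (tb_map hc)
  have h2 := h1.const_mul ((m + 1 : ℝ)⁻¹)
  have heq : (fun x : ℝ => ((m:ℝ) + 1)⁻¹ * ((fun s : ℝ => (s - 1) * ∑' k : ℕ, a k ^ s)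
      ((1 : ℝ) + ((m:ℝ) + 1) * x))) =
      fun x : ℝ => x * ∑' k : ℕ, a k ^ (1 + ((m:ℝ) + 1) * x) := by
    funext x
    have : ((1:ℝ) + ((m:ℝ)+1) * x - 1) = ((m:ℝ)+1) * x := by ring
    simp only [Function.comp, this]
    field_simp
  rw [div_eq_inv_mul]
  exact heq ▸ h2

lemma tb_rpow_mem (a : ℕ → ℝ) (hpos : ∀ k, 0 ≤ a k) (ha1 : ∀ k, a k ≤ 1)
    {x : ℝ} (hx : 0 ≤ x) (k : ℕ) : a k ^ x ∈ Set.Icc (0:ℝ) 1 :=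
  ⟨Real.rpow_nonneg (hpos k) x, Real.rpow_le_one (hpos k) (ha1 k) hx⟩

lemma tb_summable (a : ℕ → ℝ) (hpos : ∀ k, 0 ≤ a k) (ha1 : ∀ k, a k ≤ 1)
    (hsum : ∀ s : ℝ, 1 < s → Summable fun k => a k ^ s)
    {x : ℝ} (hx : 0 < x) (q : Polynomial ℝ) :
    Summable fun k => a k ^ (1 + x) * q.eval (a k ^ x) := by
  obtain ⟨C, hC⟩ := (isCompact_Icc (a := (0:ℝ)) (b := 1)).exists_bound_of_continuousOn
    (q.continuous.continuousOn)
  have hs : Summable fun k => C * a k ^ (1 + x) := (hsum (1 + x) (by linarith)).mul_left C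
  apply Summable.of_norm_bounded hs
  intro k
  have h1 : ‖a k ^ (1 + x) * q.eval (a k ^ x)‖
      = a k ^ (1 + x) * ‖q.eval (a k ^ x)‖ := by
    rw [norm_mul, Real.norm_eq_abs, abs_of_nonneg (Real.rpow_nonneg (hpos k) _)]
  rw [h1, mul_comm C]
  exact mul_le_mul_of_nonneg_left (hC _ (tb_rpow_mem a hpos ha1 hx.le k))
    (Real.rpow_nonneg (hpos k) _)

lemma tb_rpow_combine (a : ℕ → ℝ) (hpos : ∀ k, 0 ≤ a k) {x : ℝ} (hx : 0 < x)
    (n : ℕ) (k : ℕ) : a k ^ (1 + x) * (a k ^ x) ^ n = a k ^ (1 + ((n:ℝ) + 1) * x) := by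
  have h1 : (a k ^ x) ^ n = a k ^ (x * n) := by
    rw [← Real.rpow_natCast (a k ^ x) n, ← Real.rpow_mul (hpos k)]
  rw [h1, ← Real.rpow_add' (hpos k) (by positivity)]
  ring_nf

lemma tb_poly (a : ℕ → ℝ) (hpos : ∀ k, 0 ≤ a k) (ha1 : ∀ k, a k ≤ 1)
    (hsum : ∀ s : ℝ, 1 < s → Summable fun k => a k ^ s) (L : ℝ)
    (hres : Tendsto (fun s : ℝ => (s - 1) * ∑' k : ℕ, a k ^ s) (𝓝[>] (1 : ℝ)) (𝓝 L))
    (q : Polynomial ℝ) :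
    Tendsto (fun x : ℝ => x * ∑' k : ℕ, a k ^ (1 + x) * q.eval (a k ^ x)) (𝓝[>] (0:ℝ))
      (𝓝 (L * ∫ t in (0:ℝ)..1, q.eval t)) := by
  induction q using Polynomial.induction_on' with
  | add p q hp hq =>
    have hint : (∫ t in (0:ℝ)..1, (p + q).eval t)
        = (∫ t in (0:ℝ)..1, p.eval t) + ∫ t in (0:ℝ)..1, q.eval t := by
      simp only [Polynomial.eval_add]
      exact intervalIntegral.integral_add (p.continuous.intervalIntegrable 0 1)
        (q.continuous.intervalIntegrable 0 1)
    have key : ∀ x : ℝ, x ∈ Set.Ioi (0:ℝ) →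
        x * ∑' k : ℕ, a k ^ (1 + x) * (p + q).eval (a k ^ x)
        = x * ∑' k : ℕ, a k ^ (1 + x) * p.eval (a k ^ x)
          + x * ∑' k : ℕ, a k ^ (1 + x) * q.eval (a k ^ x) := by
      intro x hx
      have hx : (0:ℝ) < x := hx
      have h1 : ∀ k : ℕ, a k ^ (1 + x) * (p + q).eval (a k ^ x)
          = a k ^ (1 + x) * p.eval (a k ^ x) + a k ^ (1 + x) * q.eval (a k ^ x) := by
        intro k; rw [Polynomial.eval_add]; ring
      rw [tsum_congr h1, Summable.tsum_add (tb_summable a hpos ha1 hsum hx p)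
        (tb_summable a hpos ha1 hsum hx q)]
      ring
    rw [hint, mul_add]
    refine Tendsto.congr' ?_ (hp.add hq)
    filter_upwards [self_mem_nhdsWithin] with x hx
    exact (key x hx).symm
  | monomial n c =>
    have hint : (∫ t in (0:ℝ)..1, (Polynomial.monomial n c).eval t) = c / ((n:ℝ) + 1) := by
      simp only [Polynomial.eval_monomial]
      rw [intervalIntegral.integral_const_mul, integral_pow]
      simp [div_eq_mul_inv]
    rw [hint]
    have key : ∀ x : ℝ, x ∈ Set.Ioi (0:ℝ) →
        x * ∑' k : ℕ, a k ^ (1 + ((n:ℝ) + 1) * x) * c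
        = x * ∑' k : ℕ, a k ^ (1 + x) * (Polynomial.monomial n c).eval (a k ^ x) := by
      intro x hx
      congr 1
      apply tsum_congr
      intro k
      rw [Polynomial.eval_monomial, ← tb_rpow_combine a hpos hx n k]
      ring
    have h2 := (tb_moment a L hres n).const_mul c
    have h3 : Tendsto (fun x : ℝ => x * ∑' k : ℕ, a k ^ (1 + ((n:ℝ) + 1) * x) * c)
        (𝓝[>] (0:ℝ)) (𝓝 (c * (L / ((n:ℝ) + 1)))) := by
      refine Tendsto.congr ?_ h2
      intro x
      rw [tsum_mul_right]
      ring
    have : c * (L / ((n:ℝ) + 1)) = L * (c / ((n:ℝ) + 1)) := by ring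
    rw [← this]
    refine Tendsto.congr' ?_ h3
    filter_upwards [self_mem_nhdsWithin] with x hx
    exact key x hx
section S3
variable (a : ℕ → ℝ)

lemma tb_exp_pow {x : ℝ} (hx : 0 < x) : (Real.exp (-(1/x))) ^ x = Real.exp (-1) := by
  rw [← Real.exp_mul]
  congr 1
  field_simp

lemma tb_lt_exp (hpos : ∀ k, 0 ≤ a k) (hmono : Antitone a) (hlim : Tendsto a atTop (𝓝 0))
    {x : ℝ} (hx : 0 < x) {k : ℕ} (hk : tbN a (Real.exp (-(1/x))) ≤ k) :
    a k ^ x < Real.exp (-1) := by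
  have h := tbN_lt a hmono hlim (Real.exp_pos _) hk
  rcases eq_or_lt_of_le (hpos k) with h0 | h0
  · rw [← h0, Real.zero_rpow hx.ne']
    exact Real.exp_pos _
  · calc a k ^ x < (Real.exp (-(1/x))) ^ x := Real.rpow_lt_rpow (hpos k) h hx
    _ = Real.exp (-1) := tb_exp_pow hx

lemma tb_ge_exp {x : ℝ} (hx : 0 < x) {k : ℕ} (hk : k < tbN a (Real.exp (-(1/x)))) :
    Real.exp (-1) ≤ a k ^ x := by
  have h := tbN_le a hk
  calc Real.exp (-1) = (Real.exp (-(1/x))) ^ x := (tb_exp_pow hx).symm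
  _ ≤ a k ^ x := Real.rpow_le_rpow (Real.exp_pos _).le h hx.le

lemma tb_split (hpos : ∀ k, 0 ≤ a k) {x : ℝ} (hx : 0 < x) {k : ℕ} :
    a k ^ (1 + x) = a k * a k ^ x := by
  rw [Real.rpow_add' (hpos k) (by positivity), Real.rpow_one]

lemma tb_mid_summable {n : ℕ} :
    Summable (fun k => if k < n then a k else 0) :=
  summable_of_ne_finset_zero (s := Finset.range n)
    (fun b hb => if_neg (by simpa using hb))

lemma tb_mid_sum {n : ℕ} :
    ∑' k : ℕ, (if k < n then a k else 0) = ∑ k ∈ Finset.range n, a k := by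
  rw [tsum_eq_sum (s := Finset.range n) (fun b hb => if_neg (by simpa using hb))]
  exact Finset.sum_congr rfl (fun k hk => if_pos (by simpa using hk))

lemma tb_sand_upper (hpos : ∀ k, 0 ≤ a k) (hmono : Antitone a)
    (hlim : Tendsto a atTop (𝓝 0)) (ha1 : ∀ k, a k ≤ 1)
    (hsum : ∀ s : ℝ, 1 < s → Summable fun k => a k ^ s)
    {x : ℝ} (hx : 0 < x) (q : Polynomial ℝ)
    (hq0 : ∀ t ∈ Set.Icc (0:ℝ) 1, t < Real.exp (-1) → 0 ≤ q.eval t)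
    (hq1 : ∀ t ∈ Set.Icc (0:ℝ) 1, Real.exp (-1) ≤ t → 1 ≤ t * q.eval t) :
    ∑ k ∈ Finset.range (tbN a (Real.exp (-(1/x)))), a k
      ≤ ∑' k : ℕ, a k ^ (1 + x) * q.eval (a k ^ x) := by
  set n := tbN a (Real.exp (-(1/x))) with hn
  rw [← tb_mid_sum a]
  refine Summable.tsum_le_tsum ?_ (tb_mid_summable a) (tb_summable a hpos ha1 hsum hx q)
  intro k
  have htm := tb_rpow_mem a hpos ha1 hx.le k
  by_cases hk : k < n
  · rw [if_pos hk, tb_split a hpos hx]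
    have h1 : 1 ≤ a k ^ x * q.eval (a k ^ x) := hq1 _ htm (tb_ge_exp a hx hk)
    calc a k = a k * 1 := by ring
    _ ≤ a k * (a k ^ x * q.eval (a k ^ x)) := by
        exact mul_le_mul_of_nonneg_left h1 (hpos k)
    _ = a k * a k ^ x * q.eval (a k ^ x) := by ring
  · rw [if_neg hk]
    exact mul_nonneg (Real.rpow_nonneg (hpos k) _)
      (hq0 _ htm (tb_lt_exp a hpos hmono hlim hx (by omega)))

lemma tb_sand_lower (hpos : ∀ k, 0 ≤ a k) (hmono : Antitone a)
    (hlim : Tendsto a atTop (𝓝 0)) (ha1 : ∀ k, a k ≤ 1)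
    (hsum : ∀ s : ℝ, 1 < s → Summable fun k => a k ^ s)
    {x : ℝ} (hx : 0 < x) (q : Polynomial ℝ)
    (hq0 : ∀ t ∈ Set.Icc (0:ℝ) 1, t < Real.exp (-1) → q.eval t ≤ 0)
    (hq1 : ∀ t ∈ Set.Icc (0:ℝ) 1, Real.exp (-1) ≤ t → t * q.eval t ≤ 1) :
    ∑' k : ℕ, a k ^ (1 + x) * q.eval (a k ^ x)
      ≤ ∑ k ∈ Finset.range (tbN a (Real.exp (-(1/x)))), a k := by
  set n := tbN a (Real.exp (-(1/x))) with hn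
  rw [← tb_mid_sum a]
  refine Summable.tsum_le_tsum ?_ (tb_summable a hpos ha1 hsum hx q) (tb_mid_summable a)
  intro k
  have htm := tb_rpow_mem a hpos ha1 hx.le k
  by_cases hk : k < n
  · rw [if_pos hk, tb_split a hpos hx]
    have h1 : a k ^ x * q.eval (a k ^ x) ≤ 1 := hq1 _ htm (tb_ge_exp a hx hk)
    calc a k * a k ^ x * q.eval (a k ^ x) = a k * (a k ^ x * q.eval (a k ^ x)) := by ring
    _ ≤ a k * 1 := mul_le_mul_of_nonneg_left h1 (hpos k)
    _ = a k := by ring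
  · rw [if_neg hk]
    exact mul_nonpos_of_nonneg_of_nonpos (Real.rpow_nonneg (hpos k) _)
      (hq0 _ htm (tb_lt_exp a hpos hmono hlim hx (by omega)))

end S3
section S4

noncomputable def tbRampP (δ t : ℝ) : ℝ :=
  min 1 (max 0 ((t - Real.exp (-1) * (1 - δ)) / (Real.exp (-1) * δ)))

noncomputable def tbRampM (δ t : ℝ) : ℝ :=
  min 1 (max 0 ((t - Real.exp (-1)) / (Real.exp (-1) * δ)))

noncomputable def tbGP (δ t : ℝ) : ℝ := tbRampP δ t / max t (Real.exp (-1) / 2)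

noncomputable def tbGM (δ t : ℝ) : ℝ := tbRampM δ t / max t (Real.exp (-1) / 2)

lemma tb_c_pos : (0:ℝ) < Real.exp (-1) := Real.exp_pos _

lemma tb_c_le_half : Real.exp (-1) ≤ 1/2 := by
  have h2 : (2:ℝ) ≤ Real.exp 1 := by
    have := Real.add_one_le_exp 1; linarith
  rw [Real.exp_neg]
  rw [inv_le_comm₀ (Real.exp_pos 1) (by norm_num)]
  linarith [h2]

lemma tb_denom_pos (t : ℝ) : (0:ℝ) < max t (Real.exp (-1) / 2) :=
  lt_of_lt_of_le (by positivity) (le_max_right _ _)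

lemma tb_rampP_nonneg (δ t : ℝ) : 0 ≤ tbRampP δ t :=
  le_min zero_le_one (le_max_left _ _)

lemma tb_rampM_nonneg (δ t : ℝ) : 0 ≤ tbRampM δ t :=
  le_min zero_le_one (le_max_left _ _)

lemma tb_gP_nonneg (δ t : ℝ) : 0 ≤ tbGP δ t :=
  div_nonneg (tb_rampP_nonneg δ t) (tb_denom_pos t).le

lemma tb_gM_nonneg (δ t : ℝ) : 0 ≤ tbGM δ t :=
  div_nonneg (tb_rampM_nonneg δ t) (tb_denom_pos t).le

lemma tb_gP_cont (δ : ℝ) (hδ : 0 < δ) : Continuous (tbGP δ) := by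
  apply Continuous.div
  · exact continuous_const.min ((continuous_const.max
      ((continuous_id.sub continuous_const).div_const _)))
  · exact continuous_id.max continuous_const
  · exact fun t => (tb_denom_pos t).ne'

lemma tb_gM_cont (δ : ℝ) (hδ : 0 < δ) : Continuous (tbGM δ) := by
  apply Continuous.div
  · exact continuous_const.min ((continuous_const.max
      ((continuous_id.sub continuous_const).div_const _)))
  · exact continuous_id.max continuous_const
  · exact fun t => (tb_denom_pos t).ne'

/-- on `[c,1]`, `1 ≤ t * gP t`. -/
lemma tb_gP_ge (δ t : ℝ) (hδ : 0 < δ) (hct : Real.exp (-1) ≤ t) :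
    1 ≤ t * tbGP δ t := by
  have hc := tb_c_pos
  have ht : 0 < t := lt_of_lt_of_le hc hct
  have hramp : tbRampP δ t = 1 := by
    have h1 : (1:ℝ) ≤ (t - Real.exp (-1) * (1 - δ)) / (Real.exp (-1) * δ) := by
      rw [le_div_iff₀ (by positivity)]
      nlinarith
    unfold tbRampP
    rw [max_eq_right (le_trans zero_le_one h1), min_eq_left h1]
  have hden : max t (Real.exp (-1) / 2) = t := max_eq_left (by linarith)
  unfold tbGP
  rw [hramp, hden, mul_one_div, div_self ht.ne']

/-- on `[0,c]`, `gM t = 0`. -/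
lemma tb_gM_eq_zero (δ t : ℝ) (hδ : 0 < δ) (htc : t ≤ Real.exp (-1)) :
    tbGM δ t = 0 := by
  have hc := tb_c_pos
  have hramp : tbRampM δ t = 0 := by
    have h1 : (t - Real.exp (-1)) / (Real.exp (-1) * δ) ≤ 0 :=
      div_nonpos_of_nonpos_of_nonneg (by linarith) (by positivity)
    unfold tbRampM
    rw [max_eq_left h1, min_eq_right zero_le_one]
  unfold tbGM
  rw [hramp, zero_div]

/-- on `[c,1]`, `t * gM t ≤ 1`. -/
lemma tb_gM_le (δ t : ℝ) (hδ : 0 < δ) (hct : Real.exp (-1) ≤ t) :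
    t * tbGM δ t ≤ 1 := by
  have hc := tb_c_pos
  have ht : 0 < t := lt_of_lt_of_le hc hct
  have hden : max t (Real.exp (-1) / 2) = t := max_eq_left (by linarith)
  unfold tbGM
  rw [hden, mul_div_assoc']
  rw [div_le_one ht]
  calc t * tbRampM δ t ≤ t * 1 :=
    mul_le_mul_of_nonneg_left (min_le_left _ _) ht.le
  _ = t := by ring

/-- `gP t ≤ 1/t` for `t > 0`. -/
lemma tb_gP_le_inv (δ t : ℝ) (ht : 0 < t) : tbGP δ t ≤ 1 / t := by
  unfold tbGP
  exact div_le_div₀ zero_le_one (min_le_left _ _) ht (le_max_left _ _)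

lemma tb_gP_zero (δ t : ℝ) (hδ : 0 < δ) (ht : t ≤ Real.exp (-1) * (1 - δ)) :
    tbGP δ t = 0 := by
  have hc := tb_c_pos
  have hramp : tbRampP δ t = 0 := by
    have h1 : (t - Real.exp (-1) * (1 - δ)) / (Real.exp (-1) * δ) ≤ 0 :=
      div_nonpos_of_nonpos_of_nonneg (by linarith) (by positivity)
    unfold tbRampP
    rw [max_eq_left h1, min_eq_right zero_le_one]
  unfold tbGP
  rw [hramp, zero_div]

lemma tb_gM_eq_inv (δ t : ℝ) (hδ : 0 < δ) (ht : Real.exp (-1) * (1 + δ) ≤ t) :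
    tbGM δ t = 1 / t := by
  have hc := tb_c_pos
  have hct : Real.exp (-1) ≤ t := le_trans (by nlinarith) ht
  have ht0 : 0 < t := lt_of_lt_of_le hc hct
  have hramp : tbRampM δ t = 1 := by
    have h1 : (1:ℝ) ≤ (t - Real.exp (-1)) / (Real.exp (-1) * δ) := by
      rw [le_div_iff₀ (by positivity)]
      nlinarith
    unfold tbRampM
    rw [max_eq_right (le_trans zero_le_one h1), min_eq_left h1]
  have hden : max t (Real.exp (-1) / 2) = t := max_eq_left (by linarith)
  unfold tbGM
  rw [hramp, hden]

lemma tb_intP (δ : ℝ) (hδ : 0 < δ) (hδ2 : δ ≤ 1/2) :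
    (∫ t in (0:ℝ)..1, tbGP δ t) ≤ 1 + 2*δ := by
  have hc := tb_c_pos
  have hch := tb_c_le_half
  set c := Real.exp (-1) with hcdef
  set A := c * (1 - δ) with hA
  have hA0 : 0 < A := by nlinarith
  have hA1 : A ≤ 1 := by nlinarith
  have hint : IntervalIntegrable (tbGP δ) MeasureTheory.volume 0 A :=
    (tb_gP_cont δ hδ).intervalIntegrable 0 A
  have hint2 : IntervalIntegrable (tbGP δ) MeasureTheory.volume A 1 :=
    (tb_gP_cont δ hδ).intervalIntegrable A 1
  rw [← intervalIntegral.integral_add_adjacent_intervals hint hint2]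
  have h1 : (∫ t in (0:ℝ)..A, tbGP δ t) = 0 := by
    rw [intervalIntegral.integral_congr (g := fun _ => (0:ℝ))]
    · simp
    · intro t ht
      rw [Set.uIcc_of_le hA0.le] at ht
      exact tb_gP_zero δ t hδ (le_trans ht.2 le_rfl)
  have h2 : (∫ t in A..1, tbGP δ t) ≤ ∫ t in A..1, 1/t := by
    apply intervalIntegral.integral_mono_on hA1 hint2
    · apply ContinuousOn.intervalIntegrable
      apply ContinuousOn.div continuousOn_const continuousOn_id
      intro t ht
      rw [Set.uIcc_of_le hA1] at ht
      exact ne_of_gt (lt_of_lt_of_le hA0 ht.1)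
    · intro t ht
      exact tb_gP_le_inv δ t (lt_of_lt_of_le hA0 ht.1)
  have h3 : (∫ t in A..1, 1/t) = Real.log (1 / A) := by
    rw [integral_one_div]
    · rw [Set.uIcc_of_le hA1]
      intro hmem
      exact absurd hmem.1 (not_le.mpr hA0)
  have h4 : Real.log (1 / A) ≤ 1 + 2*δ := by
    have hlogA : Real.log A = -1 + Real.log (1 - δ) := by
      rw [hA, Real.log_mul hc.ne' (by linarith), hcdef, Real.log_exp]
    have hexp : Real.exp (-(2*δ)) ≤ 1 - δ := by
      have he : 1 + 2*δ ≤ Real.exp (2*δ) := by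
        have := Real.add_one_le_exp (2*δ); linarith
      rw [Real.exp_neg]
      rw [inv_le_comm₀ (Real.exp_pos _) (by linarith)]
      have hx : (1 - δ)⁻¹ ≤ 1 + 2*δ := by
        rw [inv_eq_one_div, div_le_iff₀ (by linarith)]
        nlinarith
      linarith
    have hlog : -(2*δ) ≤ Real.log (1 - δ) := by
      calc -(2*δ) = Real.log (Real.exp (-(2*δ))) := (Real.log_exp _).symm
      _ ≤ Real.log (1 - δ) := Real.log_le_log (Real.exp_pos _) hexp
    rw [Real.log_div one_ne_zero hA0.ne', Real.log_one, hlogA]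
    linarith
  linarith [h1, h2, h3, h4]

lemma tb_intM (δ : ℝ) (hδ : 0 < δ) (hδ2 : δ ≤ 1/2) :
    1 - δ ≤ ∫ t in (0:ℝ)..1, tbGM δ t := by
  have hc := tb_c_pos
  have hch := tb_c_le_half
  set c := Real.exp (-1) with hcdef
  set B := c * (1 + δ) with hB
  have hB0 : 0 < B := by nlinarith
  have hB1 : B ≤ 1 := by nlinarith
  have hint : IntervalIntegrable (tbGM δ) MeasureTheory.volume 0 B :=
    (tb_gM_cont δ hδ).intervalIntegrable 0 B
  have hint2 : IntervalIntegrable (tbGM δ) MeasureTheory.volume B 1 :=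
    (tb_gM_cont δ hδ).intervalIntegrable B 1
  rw [← intervalIntegral.integral_add_adjacent_intervals hint hint2]
  have h1 : (0:ℝ) ≤ ∫ t in (0:ℝ)..B, tbGM δ t :=
    intervalIntegral.integral_nonneg hB0.le (fun t _ => tb_gM_nonneg δ t)
  have h2 : (∫ t in B..1, tbGM δ t) = ∫ t in B..1, 1/t := by
    apply intervalIntegral.integral_congr
    intro t ht
    rw [Set.uIcc_of_le hB1] at ht
    exact tb_gM_eq_inv δ t hδ ht.1
  have h3 : (∫ t in B..1, 1/t) = Real.log (1 / B) := by
    rw [integral_one_div]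
    rw [Set.uIcc_of_le hB1]
    intro hmem
    exact absurd hmem.1 (not_le.mpr hB0)
  have h4 : 1 - δ ≤ Real.log (1 / B) := by
    have hlogB : Real.log B = -1 + Real.log (1 + δ) := by
      rw [hB, Real.log_mul hc.ne' (by linarith), hcdef, Real.log_exp]
    have hlog : Real.log (1 + δ) ≤ δ := by
      have := Real.log_le_sub_one_of_pos (show (0:ℝ) < 1 + δ by linarith)
      linarith
    rw [Real.log_div one_ne_zero hB0.ne', Real.log_one, hlogB]
    linarith
  linarith [h1, h2, h3, h4]

end S4
section S5

lemma tb_key (a : ℕ → ℝ) (hpos : ∀ k, 0 ≤ a k) (hmono : Antitone a)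
    (hlim : Tendsto a atTop (𝓝 0)) (ha1 : ∀ k, a k ≤ 1)
    (hsum : ∀ s : ℝ, 1 < s → Summable fun k => a k ^ s) (L : ℝ) (hL : 0 ≤ L)
    (hres : Tendsto (fun s : ℝ => (s - 1) * ∑' k : ℕ, a k ^ s) (𝓝[>] (1 : ℝ)) (𝓝 L)) :
    Tendsto (fun x : ℝ => x * ∑ k ∈ Finset.range (tbN a (Real.exp (-(1/x)))), a k)
      (𝓝[>] (0:ℝ)) (𝓝 L) := by
  rw [Metric.tendsto_nhds]
  intro ε hε
  set δ := min (1/2) (ε/(8*(L+1))) with hδdef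
  have hδ : 0 < δ := lt_min (by norm_num) (by positivity)
  have hδ2 : δ ≤ 1/2 := min_le_left _ _
  have hδ3 : δ ≤ ε/(8*(L+1)) := min_le_right _ _
  obtain ⟨pP, hpP⟩ := exists_polynomial_near_of_continuousOn 0 1 (tbGP δ)
    ((tb_gP_cont δ hδ).continuousOn) δ hδ
  obtain ⟨pM, hpM⟩ := exists_polynomial_near_of_continuousOn 0 1 (tbGM δ)
    ((tb_gM_cont δ hδ).continuousOn) δ hδ
  set qP := pP + Polynomial.C δ with hqP
  set qM := pM - Polynomial.C δ with hqM
  have hqP_eval : ∀ t, qP.eval t = pP.eval t + δ := by intro t; simp [hqP]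
  have hqM_eval : ∀ t, qM.eval t = pM.eval t - δ := by intro t; simp [hqM]
  have hqP_ge : ∀ t ∈ Set.Icc (0:ℝ) 1, tbGP δ t ≤ qP.eval t := by
    intro t ht
    have := hpP t ht
    rw [hqP_eval]
    cases' abs_lt.mp this with h1 h2
    linarith
  have hqP_le : ∀ t ∈ Set.Icc (0:ℝ) 1, qP.eval t ≤ tbGP δ t + 2*δ := by
    intro t ht
    have := hpP t ht
    rw [hqP_eval]
    cases' abs_lt.mp this with h1 h2
    linarith
  have hqM_le : ∀ t ∈ Set.Icc (0:ℝ) 1, qM.eval t ≤ tbGM δ t := by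
    intro t ht
    have := hpM t ht
    rw [hqM_eval]
    cases' abs_lt.mp this with h1 h2
    linarith
  have hqM_ge : ∀ t ∈ Set.Icc (0:ℝ) 1, tbGM δ t - 2*δ ≤ qM.eval t := by
    intro t ht
    have := hpM t ht
    rw [hqM_eval]
    cases' abs_lt.mp this with h1 h2
    linarith
  -- pointwise properties for the sandwich
  have hqP0 : ∀ t ∈ Set.Icc (0:ℝ) 1, t < Real.exp (-1) → 0 ≤ qP.eval t :=
    fun t ht _ => le_trans (tb_gP_nonneg δ t) (hqP_ge t ht)
  have hqP1 : ∀ t ∈ Set.Icc (0:ℝ) 1, Real.exp (-1) ≤ t → 1 ≤ t * qP.eval t := by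
    intro t ht hct
    calc (1:ℝ) ≤ t * tbGP δ t := tb_gP_ge δ t hδ hct
    _ ≤ t * qP.eval t := mul_le_mul_of_nonneg_left (hqP_ge t ht) ht.1
  have hqM0 : ∀ t ∈ Set.Icc (0:ℝ) 1, t < Real.exp (-1) → qM.eval t ≤ 0 := by
    intro t ht hct
    calc qM.eval t ≤ tbGM δ t := hqM_le t ht
    _ = 0 := tb_gM_eq_zero δ t hδ hct.le
  have hqM1 : ∀ t ∈ Set.Icc (0:ℝ) 1, Real.exp (-1) ≤ t → t * qM.eval t ≤ 1 := by
    intro t ht hct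
    calc t * qM.eval t ≤ t * tbGM δ t :=
      mul_le_mul_of_nonneg_left (hqM_le t ht) ht.1
    _ ≤ 1 := tb_gM_le δ t hδ hct
  -- integral bounds
  have hIP : (∫ t in (0:ℝ)..1, qP.eval t) ≤ 1 + 4*δ := by
    have hmono' : (∫ t in (0:ℝ)..1, qP.eval t) ≤ ∫ t in (0:ℝ)..1, (tbGP δ t + 2*δ) := by
      apply intervalIntegral.integral_mono_on (by norm_num)
        (qP.continuous.intervalIntegrable 0 1)
        (((tb_gP_cont δ hδ).add continuous_const).intervalIntegrable 0 1)
      exact hqP_le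
    have hadd : (∫ t in (0:ℝ)..1, (tbGP δ t + 2*δ))
        = (∫ t in (0:ℝ)..1, tbGP δ t) + 2*δ := by
      rw [intervalIntegral.integral_add ((tb_gP_cont δ hδ).intervalIntegrable 0 1)
        (continuous_const.intervalIntegrable 0 1)]
      simp
    have := tb_intP δ hδ hδ2
    linarith
  have hIM : 1 - 3*δ ≤ ∫ t in (0:ℝ)..1, qM.eval t := by
    have hmono' : (∫ t in (0:ℝ)..1, (tbGM δ t - 2*δ)) ≤ ∫ t in (0:ℝ)..1, qM.eval t := by
      apply intervalIntegral.integral_mono_on (by norm_num)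
        (((tb_gM_cont δ hδ).sub continuous_const).intervalIntegrable 0 1)
        (qM.continuous.intervalIntegrable 0 1)
      exact hqM_ge
    have hadd : (∫ t in (0:ℝ)..1, (tbGM δ t - 2*δ))
        = (∫ t in (0:ℝ)..1, tbGM δ t) - 2*δ := by
      rw [intervalIntegral.integral_sub ((tb_gM_cont δ hδ).intervalIntegrable 0 1)
        (continuous_const.intervalIntegrable 0 1)]
      simp
    have := tb_intM δ hδ hδ2
    linarith
  -- limits
  have HP := tb_poly a hpos ha1 hsum L hres qP
  have HM := tb_poly a hpos ha1 hsum L hres qM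
  have hub : L * (∫ t in (0:ℝ)..1, qP.eval t) < L + ε := by
    have h1 : L * (∫ t in (0:ℝ)..1, qP.eval t) ≤ L * (1 + 4*δ) :=
      mul_le_mul_of_nonneg_left hIP hL
    have h2 : 4 * (L * δ) ≤ 4 * (L * (ε/(8*(L+1)))) := by
      apply mul_le_mul_of_nonneg_left _ (by norm_num)
      exact mul_le_mul_of_nonneg_left hδ3 hL
    have h3 : 4 * (L * (ε/(8*(L+1)))) < ε := by
      rw [div_eq_mul_inv]
      have hLp : (0:ℝ) < L + 1 := by linarith
      have : 4 * (L * (ε * (8*(L+1))⁻¹)) = (L/(2*(L+1))) * ε := by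
        field_simp
        ring
      rw [this]
      have hfrac : L/(2*(L+1)) < 1 := by
        rw [div_lt_one (by linarith)]
        linarith
      nlinarith
    nlinarith
  have hlb : L - ε < L * ∫ t in (0:ℝ)..1, qM.eval t := by
    have h1 : L * (1 - 3*δ) ≤ L * ∫ t in (0:ℝ)..1, qM.eval t :=
      mul_le_mul_of_nonneg_left hIM hL
    have h2 : 3 * (L * δ) ≤ 3 * (L * (ε/(8*(L+1)))) := by
      apply mul_le_mul_of_nonneg_left _ (by norm_num)
      exact mul_le_mul_of_nonneg_left hδ3 hL
    have h3 : 3 * (L * (ε/(8*(L+1)))) < ε := by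
      have hLp : (0:ℝ) < L + 1 := by linarith
      have : 3 * (L * (ε/(8*(L+1)))) = (3*L/(8*(L+1))) * ε := by
        field_simp
      rw [this]
      have hfrac : 3*L/(8*(L+1)) < 1 := by
        rw [div_lt_one (by linarith)]
        linarith
      nlinarith
    nlinarith
  have e1 := HP.eventually_lt_const hub
  have e2 := HM.eventually_const_lt hlb
  filter_upwards [e1, e2, self_mem_nhdsWithin] with x h1 h2 hx
  have hx : (0:ℝ) < x := hx
  have s1 := tb_sand_upper a hpos hmono hlim ha1 hsum hx qP hqP0 hqP1
  have s2 := tb_sand_lower a hpos hmono hlim ha1 hsum hx qM hqM0 hqM1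
  have m1 : x * ∑ k ∈ Finset.range (tbN a (Real.exp (-(1/x)))), a k
      ≤ x * ∑' k : ℕ, a k ^ (1 + x) * qP.eval (a k ^ x) :=
    mul_le_mul_of_nonneg_left s1 hx.le
  have m2 : x * ∑' k : ℕ, a k ^ (1 + x) * qM.eval (a k ^ x)
      ≤ x * ∑ k ∈ Finset.range (tbN a (Real.exp (-(1/x)))), a k :=
    mul_le_mul_of_nonneg_left s2 hx.le
  rw [Real.dist_eq, abs_lt]
  constructor
  · linarith
  · linarith

end S5
section S6

lemma tb_T (a : ℕ → ℝ) (hpos : ∀ k, 0 ≤ a k) (hmono : Antitone a)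
    (hlim : Tendsto a atTop (𝓝 0)) (ha1 : ∀ k, a k ≤ 1)
    (hsum : ∀ s : ℝ, 1 < s → Summable fun k => a k ^ s) (L : ℝ) (hL : 0 ≤ L)
    (hres : Tendsto (fun s : ℝ => (s - 1) * ∑' k : ℕ, a k ^ s) (𝓝[>] (1 : ℝ)) (𝓝 L)) :
    Tendsto (fun l : ℝ => (∑ k ∈ Finset.range (tbN a (Real.exp (-l))), a k) / l)
      atTop (𝓝 L) := by
  have hmapinv : Tendsto (fun l : ℝ => 1/l) atTop (𝓝[>] (0:ℝ)) := by
    apply tendsto_nhdsWithin_of_tendsto_nhds_of_eventually_within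
    · simpa [one_div] using tendsto_inv_atTop_zero
    · filter_upwards [eventually_gt_atTop (0:ℝ)] with l hl
      exact one_div_pos.mpr hl
  have hcomp := (tb_key a hpos hmono hlim ha1 hsum L hL hres).comp hmapinv
  refine Tendsto.congr' ?_ hcomp
  filter_upwards [eventually_gt_atTop (0:ℝ)] with l hl
  have h1 : 1/(1/l) = l := one_div_one_div l
  simp only [Function.comp, h1]
  rw [one_div_mul_eq_div]

lemma tb_core (a : ℕ → ℝ) (hpos : ∀ k, 0 ≤ a k) (hmono : Antitone a)
    (hlim : Tendsto a atTop (𝓝 0)) (ha1 : ∀ k, a k ≤ 1)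
    (hsum : ∀ s : ℝ, 1 < s → Summable fun k => a k ^ s) (L : ℝ)
    (hres : Tendsto (fun s : ℝ => (s - 1) * ∑' k : ℕ, a k ^ s) (𝓝[>] (1 : ℝ)) (𝓝 L)) :
    Tendsto (fun N : ℕ => (1 / Real.log N) * ∑ k ∈ Finset.range N, a k)
      atTop (𝓝 L) := by
  have hL : 0 ≤ L := by
    refine ge_of_tendsto hres ?_
    filter_upwards [self_mem_nhdsWithin] with s hs
    have hs1 : (1:ℝ) < s := hs
    exact mul_nonneg (by linarith) (tsum_nonneg fun k => Real.rpow_nonneg (hpos k) _)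
  have hT := tb_T a hpos hmono hlim ha1 hsum L hL hres
  have hlog : Tendsto (fun N : ℕ => Real.log N) atTop atTop :=
    Real.tendsto_log_atTop.comp tendsto_natCast_atTop_atTop
  rw [Metric.tendsto_nhds]
  intro ε hε
  set η := min (1/2) (ε/(8*(L+1))) with hηdef
  have hη : 0 < η := lt_min (by norm_num) (by positivity)
  have hη2 : η ≤ 1/2 := min_le_left _ _
  have hη3 : η ≤ ε/(8*(L+1)) := min_le_right _ _
  have hηL : η * L < ε/8 := by
    have h1 : η * L ≤ (ε/(8*(L+1))) * L := mul_le_mul_of_nonneg_right hη3 hL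
    have h2 : (ε/(8*(L+1))) * L < ε/8 := by
      rw [div_mul_eq_mul_div, div_lt_div_iff₀ (by positivity) (by norm_num)]
      nlinarith
    linarith
  -- the two composed limits
  have hup : Tendsto (fun N : ℕ =>
      (∑ k ∈ Finset.range (tbN a (Real.exp (-((1+η) * Real.log N)))), a k) / Real.log N)
      atTop (𝓝 ((1+η) * L)) := by
    have hmap : Tendsto (fun N : ℕ => (1+η) * Real.log N) atTop atTop :=
      hlog.const_mul_atTop (by linarith)
    have h1 := (hT.comp hmap).const_mul (1+η)
    refine Tendsto.congr' ?_ h1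
    filter_upwards [hlog.eventually (eventually_gt_atTop (0:ℝ))] with N hN
    simp only [Function.comp]
    field_simp
  have hlo : Tendsto (fun N : ℕ =>
      (∑ k ∈ Finset.range (tbN a (Real.exp (-((1-η) * Real.log N)))), a k) / Real.log N)
      atTop (𝓝 ((1-η) * L)) := by
    have hmap : Tendsto (fun N : ℕ => (1-η) * Real.log N) atTop atTop :=
      hlog.const_mul_atTop (by linarith)
    have h1 := (hT.comp hmap).const_mul (1-η)
    refine Tendsto.congr' ?_ h1
    filter_upwards [hlog.eventually (eventually_gt_atTop (0:ℝ))] with N hN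
    simp only [Function.comp]
    have h1η : (1:ℝ) - η ≠ 0 := ne_of_gt (by linarith)
    field_simp
  -- eventual upper bound on partial sums
  have E1 : ∀ᶠ N : ℕ in atTop, ∑ k ∈ Finset.range N, a k
      ≤ (∑ k ∈ Finset.range (tbN a (Real.exp (-((1+η) * Real.log N)))), a k) + 1 := by
    filter_upwards [eventually_ge_atTop 1] with N hN
    have hN1 : (1:ℝ) ≤ (N:ℝ) := by exact_mod_cast hN
    have hN0 : (0:ℝ) < (N:ℝ) := by linarith
    set t := Real.exp (-((1+η) * Real.log N)) with htdef
    have ht0 : 0 < t := Real.exp_pos _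
    set m := tbN a t with hm
    rcases le_or_gt N m with hNm | hNm
    · have h1 : ∑ k ∈ Finset.range N, a k ≤ ∑ k ∈ Finset.range m, a k :=
        Finset.sum_le_sum_of_subset_of_nonneg
          (Finset.range_subset_range.mpr hNm) (fun i _ _ => hpos i)
      linarith
    · have hsplit : ∑ k ∈ Finset.range m, a k + ∑ k ∈ Finset.Ico m N, a k
          = ∑ k ∈ Finset.range N, a k := by
        rw [Finset.range_eq_Ico, Finset.range_eq_Ico]
        exact Finset.sum_Ico_consecutive a (Nat.zero_le m) hNm.le
      have h2 : ∑ k ∈ Finset.Ico m N, a k ≤ (Finset.Ico m N).card • t := by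
        apply Finset.sum_le_card_nsmul
        intro k hk
        have hk' : m ≤ k := (Finset.mem_Ico.mp hk).1
        exact (tbN_lt a hmono hlim ht0 hk').le
      have h3 : ((Finset.Ico m N).card • t : ℝ) ≤ (N:ℝ) * t := by
        rw [nsmul_eq_mul, Nat.card_Ico]
        apply mul_le_mul_of_nonneg_right _ ht0.le
        exact_mod_cast Nat.sub_le N m
      have h4 : (N:ℝ) * t ≤ 1 := by
        have hlogN : 0 ≤ Real.log N := Real.log_natCast_nonneg N
        have ht_le : t ≤ Real.exp (-(Real.log N)) := by
          apply Real.exp_le_exp.mpr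
          nlinarith
        have : Real.exp (-(Real.log N)) = ((N:ℝ))⁻¹ := by
          rw [Real.exp_neg, Real.exp_log hN0]
        calc (N:ℝ) * t ≤ (N:ℝ) * ((N:ℝ))⁻¹ := by
              apply mul_le_mul_of_nonneg_left _ hN0.le
              rw [← this]; exact ht_le
        _ = 1 := mul_inv_cancel₀ hN0.ne'
      linarith [h2, h3, h4, hsplit.ge, hsplit.le]
  -- eventual lower bound on partial sums
  have E2 : ∀ᶠ N : ℕ in atTop,
      (∑ k ∈ Finset.range (tbN a (Real.exp (-((1-η) * Real.log N)))), a k)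
        ≤ ∑ k ∈ Finset.range N, a k := by
    have hC : Summable fun k => a k ^ (1+η) := hsum (1+η) (by linarith)
    set C := ∑' k : ℕ, a k ^ (1+η) with hCdef
    have hbound : ∀ N : ℕ, ((N:ℝ)+1) * a N ^ (1+η) ≤ C := by
      intro N
      have h1 : ∑ k ∈ Finset.range (N+1), a N ^ (1+η)
          ≤ ∑ k ∈ Finset.range (N+1), a k ^ (1+η) := by
        apply Finset.sum_le_sum
        intro k hk
        have hk' : k ≤ N := by simpa [Nat.lt_succ_iff] using hk
        exact Real.rpow_le_rpow (hpos N) (hmono hk') (by linarith)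
      have h2 : ∑ k ∈ Finset.range (N+1), a k ^ (1+η) ≤ C :=
        Summable.sum_le_tsum _ (fun k _ => Real.rpow_nonneg (hpos k) _) hC
      have h3 : ∑ k ∈ Finset.range (N+1), a N ^ (1+η) = ((N:ℝ)+1) * a N ^ (1+η) := by
        rw [Finset.sum_const, Finset.card_range, nsmul_eq_mul]
        push_cast
        ring
      linarith [h1, h2, h3.ge, h3.le]
    have hgrow : Tendsto (fun N : ℕ => Real.exp (η^2 * Real.log N)) atTop atTop :=
      Real.tendsto_exp_atTop.comp (hlog.const_mul_atTop (by positivity))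
    filter_upwards [hgrow.eventually_gt_atTop C, eventually_ge_atTop 1] with N hNC hN1
    have hN1' : (1:ℝ) ≤ (N:ℝ) := by exact_mod_cast hN1
    have hN0 : (0:ℝ) < (N:ℝ) := by linarith
    set t := Real.exp (-((1-η) * Real.log N)) with htdef
    have ht0 : 0 < t := Real.exp_pos _
    -- show `a N < t`, hence `tbN a t ≤ N`
    have hts : t ^ (1+η) = Real.exp (-((1-η^2) * Real.log N)) := by
      rw [htdef, ← Real.exp_mul]
      congr 1
      ring
    have hkey : a N ^ (1+η) < t ^ (1+η) := by
      rw [hts]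
      have h5 : ((N:ℝ)+1) * Real.exp (-((1-η^2) * Real.log N))
          > C := by
        have h6 : (N:ℝ) * Real.exp (-((1-η^2) * Real.log N))
            = Real.exp (η^2 * Real.log N) := by
          have hNe : (N:ℝ) = Real.exp (Real.log N) := (Real.exp_log hN0).symm
          calc (N:ℝ) * Real.exp (-((1-η^2) * Real.log N))
              = Real.exp (Real.log N) * Real.exp (-((1-η^2) * Real.log N)) := by
                rw [← hNe]
          _ = Real.exp (Real.log N + -((1-η^2) * Real.log N)) := by
                rw [← Real.exp_add]
          _ = Real.exp (η^2 * Real.log N) := by congr 1; ring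
        have h7 : ((N:ℝ)+1) * Real.exp (-((1-η^2) * Real.log N))
            ≥ (N:ℝ) * Real.exp (-((1-η^2) * Real.log N)) := by
          apply mul_le_mul_of_nonneg_right _ (Real.exp_pos _).le
          linarith
        rw [h6] at h7
        linarith [hNC]
      rcases lt_or_ge (a N ^ (1+η)) (Real.exp (-((1-η^2) * Real.log N))) with h | h
      · exact h
      · exfalso
        have := hbound N
        nlinarith [Real.exp_pos (-((1-η^2) * Real.log N))]
    have haN : a N < t := by
      by_contra hcon
      push_neg at hcon
      have := Real.rpow_le_rpow ht0.le hcon (by linarith : (0:ℝ) ≤ 1+η)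
      linarith
    have hmN : tbN a t ≤ N := Nat.sInf_le haN
    exact Finset.sum_le_sum_of_subset_of_nonneg
      (Finset.range_subset_range.mpr hmN) (fun i _ _ => hpos i)
  -- assemble
  have eup := hup.eventually_lt_const (show (1+η)*L < (1+η)*L + ε/4 by linarith)
  have elo := hlo.eventually_const_lt (show (1-η)*L - ε/4 < (1-η)*L by linarith)
  have einv : ∀ᶠ N : ℕ in atTop, 1 / Real.log N < ε/4 ∧ 0 < Real.log N := by
    filter_upwards [hlog.eventually (eventually_gt_atTop (4/ε)),
      hlog.eventually (eventually_gt_atTop (0:ℝ))] with N h1 h2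
    refine ⟨?_, h2⟩
    rw [div_lt_iff₀ h2]
    have h3 : 4/ε < Real.log N := h1
    rw [div_lt_iff₀ hε] at h3
    nlinarith
  filter_upwards [E1, E2, eup, elo, einv] with N hE1 hE2 hup' hlo' ⟨hinv, hlogN⟩
  rw [Real.dist_eq, abs_lt]
  have hS := Finset.sum_nonneg (fun i (_ : i ∈ Finset.range N) => hpos i)
  constructor
  · -- lower bound
    have h1 : (∑ k ∈ Finset.range (tbN a (Real.exp (-((1-η) * Real.log N)))), a k)
        / Real.log N ≤ (∑ k ∈ Finset.range N, a k) / Real.log N := by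
      exact div_le_div_of_nonneg_right hE2 hlogN.le
    have h2 : L - ε < (1-η)*L - ε/4 := by nlinarith
    rw [one_div_mul_eq_div]
    linarith
  · -- upper bound
    have h1 : (∑ k ∈ Finset.range N, a k) / Real.log N
        ≤ ((∑ k ∈ Finset.range (tbN a (Real.exp (-((1+η) * Real.log N)))), a k) + 1)
          / Real.log N := by
      exact div_le_div_of_nonneg_right hE1 hlogN.le
    have h2 : ((∑ k ∈ Finset.range (tbN a (Real.exp (-((1+η) * Real.log N)))), a k) + 1)
        / Real.log N = (∑ k ∈ Finset.range (tbN a (Real.exp (-((1+η) * Real.log N)))), a k)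
          / Real.log N + 1 / Real.log N := by
      rw [add_div]
    have h3 : (1+η)*L + ε/4 + ε/4 < L + ε := by nlinarith
    rw [one_div_mul_eq_div]
    linarith
end S6

/-- Tauberian criterion (scalar version): if `a` is nonnegative, nonincreasing, tends
to `0`, `∑ a_k^s < ∞` for all `s > 1` and `lim_{s→1⁺} (s-1) ∑ a_k^s = L`, then
`(1/log N) ∑_{k<N} a_k → L`. -/
theorem tauberian_criterion (a : ℕ → ℝ) (hpos : ∀ k, 0 ≤ a k) (hmono : Antitone a)
    (hlim : Tendsto a atTop (𝓝 0))
    (hsum : ∀ s : ℝ, 1 < s → Summable fun k => a k ^ s) (L : ℝ)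
    (hres : Tendsto (fun s : ℝ => (s - 1) * ∑' k : ℕ, a k ^ s) (𝓝[>] (1 : ℝ)) (𝓝 L)) :
    Tendsto (fun N : ℕ => (1 / Real.log N) * ∑ k ∈ Finset.range N, a k)
      atTop (𝓝 L) := by
  set b : ℕ → ℝ := fun k => min (a k) 1 with hb
  have hbpos : ∀ k, 0 ≤ b k := fun k => le_min (hpos k) zero_le_one
  have hbmono : Antitone b := fun i j h => min_le_min (hmono h) le_rfl
  have hb1 : ∀ k, b k ≤ 1 := fun k => min_le_right _ _
  have hble : ∀ k, b k ≤ a k := fun k => min_le_left _ _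
  have hblim : Tendsto b atTop (𝓝 0) :=
    tendsto_of_tendsto_of_tendsto_of_le_of_le tendsto_const_nhds hlim hbpos hble
  have hbsum : ∀ s : ℝ, 1 < s → Summable fun k => b k ^ s := by
    intro s hs
    refine (hsum s hs).of_nonneg_of_le (fun k => Real.rpow_nonneg (hbpos k) _) ?_
    exact fun k => Real.rpow_le_rpow (hbpos k) (hble k) (by linarith)
  obtain ⟨K, hK⟩ : ∃ K : ℕ, ∀ k ≥ K, a k < 1 :=
    eventually_atTop.mp (hlim.eventually (eventually_lt_nhds one_pos))
  have hbk : ∀ k ≥ K, b k = a k := fun k hk => min_eq_left (hK k hk).le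
  -- the finite correction term
  have hdsupp : ∀ s : ℝ, ∀ k ∉ Finset.range K, a k ^ s - b k ^ s = 0 := by
    intro s k hk
    rw [hbk k (by simpa using hk)]
    ring
  have hressub : Tendsto (fun s : ℝ => (s - 1) * ∑ k ∈ Finset.range K, (a k ^ s - b k ^ s))
      (𝓝[>] (1:ℝ)) (𝓝 0) := by
    set D := ∑ k ∈ Finset.range K, (a k ^ 2 + 2) with hD
    have hbnd : ∀ᶠ s : ℝ in 𝓝[>] (1:ℝ),
        ‖(s - 1) * ∑ k ∈ Finset.range K, (a k ^ s - b k ^ s)‖ ≤ (s - 1) * D := by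
      filter_upwards [Ioo_mem_nhdsGT_of_mem (Set.mem_Ico.mpr ⟨le_refl (1:ℝ), one_lt_two⟩)]
        with s hs
      have hs1 : (1:ℝ) < s := hs.1
      have hs2 : s ≤ 2 := hs.2.le
      have hterm : ∀ k, |a k ^ s - b k ^ s| ≤ a k ^ 2 + 2 := by
        intro k
        have ha1 : a k ^ s ≤ 1 + a k ^ 2 := by
          rcases le_or_gt (a k) 1 with h | h
          · have hle : a k ^ s ≤ 1 := Real.rpow_le_one (hpos k) h (by linarith)
            nlinarith [sq_nonneg (a k)]
          · have h2 : a k ^ s ≤ a k ^ (2:ℝ) :=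
              Real.rpow_le_rpow_of_exponent_le h.le hs2
            have h3 : a k ^ (2:ℝ) = a k ^ (2:ℕ) := by
              rw [← Real.rpow_natCast (a k) 2]
              norm_num
            exact (h3 ▸ h2).trans (by nlinarith)
        have hb1' : b k ^ s ≤ 1 := Real.rpow_le_one (hbpos k) (hb1 k) (by linarith)
        have hb0 : 0 ≤ b k ^ s := Real.rpow_nonneg (hbpos k) _
        have ha0 : 0 ≤ a k ^ s := Real.rpow_nonneg (hpos k) _
        rw [abs_le]
        constructor <;> nlinarith
      have habs : |∑ k ∈ Finset.range K, (a k ^ s - b k ^ s)| ≤ D := by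
        calc |∑ k ∈ Finset.range K, (a k ^ s - b k ^ s)|
            ≤ ∑ k ∈ Finset.range K, |a k ^ s - b k ^ s| := Finset.abs_sum_le_sum_abs _ _
        _ ≤ D := Finset.sum_le_sum (fun k _ => hterm k)
      rw [norm_mul, Real.norm_eq_abs, Real.norm_eq_abs, abs_of_nonneg (by linarith : (0:ℝ) ≤ s - 1)]
      have hD0 : 0 ≤ D := le_trans (abs_nonneg _) habs
      exact mul_le_mul_of_nonneg_left habs (by linarith)
    have hz : Tendsto (fun s : ℝ => (s - 1) * D) (𝓝[>] (1:ℝ)) (𝓝 0) := by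
      have h1 : Tendsto (fun s : ℝ => s - 1) (𝓝 (1:ℝ)) (𝓝 0) := by
        have h : Tendsto (fun s : ℝ => s - 1) (𝓝 (1:ℝ)) (𝓝 (1 - 1)) :=
          Filter.Tendsto.sub tendsto_id tendsto_const_nhds
        simpa using h
      have h2 : Tendsto (fun s : ℝ => s - 1) (𝓝[>] (1:ℝ)) (𝓝 0) :=
        h1.mono_left (nhdsWithin_le_nhds (s := Set.Ioi (1:ℝ)))
      have h3 := h2.mul_const D
      simpa using h3
    exact squeeze_zero_norm' hbnd hz
  have htsum_eq : ∀ s : ℝ, 1 < s →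
      (∑' k : ℕ, a k ^ s) = (∑' k : ℕ, b k ^ s) + ∑ k ∈ Finset.range K, (a k ^ s - b k ^ s) := by
    intro s hs
    have hsummd : Summable (fun k => a k ^ s - b k ^ s) :=
      summable_of_ne_finset_zero (hdsupp s)
    have h1 : ∀ k : ℕ, a k ^ s = b k ^ s + (a k ^ s - b k ^ s) := fun k => by ring
    rw [tsum_congr h1, Summable.tsum_add (hbsum s hs) hsummd, tsum_eq_sum (hdsupp s)]
  have hbres : Tendsto (fun s : ℝ => (s - 1) * ∑' k : ℕ, b k ^ s) (𝓝[>] (1:ℝ)) (𝓝 L) := by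
    have hcomb := hres.sub hressub
    rw [sub_zero] at hcomb
    refine Tendsto.congr' ?_ hcomb
    filter_upwards [self_mem_nhdsWithin] with s hs
    have hs1 : (1:ℝ) < s := hs
    rw [htsum_eq s hs1]
    ring
  have hcore := tb_core b hbpos hbmono hblim hb1 hbsum L hbres
  -- transfer the conclusion back to `a`
  set C0 := ∑ k ∈ Finset.range K, (a k - b k) with hC0
  have hdiff : ∀ N : ℕ, K ≤ N →
      ∑ k ∈ Finset.range N, a k = (∑ k ∈ Finset.range N, b k) + C0 := by
    intro N hN
    have h1 : ∀ k : ℕ, a k = b k + (a k - b k) := fun k => by ring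
    have h2 : ∑ k ∈ Finset.range N, (a k - b k) = C0 := by
      rw [hC0]
      refine (Finset.sum_subset (Finset.range_subset_range.mpr hN) ?_).symm
      intro k _ hk
      rw [hbk k (by simpa using hk)]
      ring
    calc ∑ k ∈ Finset.range N, a k
        = ∑ k ∈ Finset.range N, (b k + (a k - b k)) := Finset.sum_congr rfl (fun k _ => h1 k)
    _ = (∑ k ∈ Finset.range N, b k) + ∑ k ∈ Finset.range N, (a k - b k) :=
        Finset.sum_add_distrib
    _ = (∑ k ∈ Finset.range N, b k) + C0 := by rw [h2]
  have hc0 : Tendsto (fun N : ℕ => (1 / Real.log N) * C0) atTop (𝓝 0) := by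
    have hlog : Tendsto (fun N : ℕ => Real.log N) atTop atTop :=
      Real.tendsto_log_atTop.comp tendsto_natCast_atTop_atTop
    have h1 : Tendsto (fun N : ℕ => 1 / Real.log N) atTop (𝓝 0) := by
      simpa [one_div, Function.comp_def] using tendsto_inv_atTop_zero.comp hlog
    have := h1.mul_const C0
    simpa using this
  have hcomb := hcore.add hc0
  rw [add_zero] at hcomb
  refine Tendsto.congr' ?_ hcomb
  filter_upwards [eventually_ge_atTop K] with N hN
  rw [hdiff N hN]
  ring
end
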